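/- Let q ∈ (0, 1/2] and let N ≥ 1 be an integer. For every finite list (n_1,…,n_I) of positive integers with n_1 + … + n_I = N, one has q^{−n_1} + … + q^{−n_I} ≥ N/q. Moreover, if q < 1/2 and some part n_i ≥ 2, the inequality is strict; that is, for q < 1/2 the unique optimal composition under policy A is N parts of size 1 (individual testing). -/

import Mathlib

/-- The cost of a list of group sizes: `q^{-n_1} + ⋯ + q^{-n_I}`. -/
noncomputable def cost (q : ℝ) (l : List ℕ) : ℝ := (l.map fun n => q ^ (-(n : ℝ))).sum

lemma rpow_eq_pow_inv (q : ℝ) (hq0 : 0 < q) (n : ℕ) :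
    q ^ (-(n : ℝ)) = (q⁻¹) ^ n := by
  rw [Real.rpow_neg hq0.le, Real.rpow_natCast, inv_pow]

lemma nat_le_two_pow (n : ℕ) (hn : 1 ≤ n) : (n : ℝ) ≤ 2 ^ (n - 1) := by
  have h := Nat.lt_two_pow_self (n := n - 1)
  have : n ≤ 2 ^ (n - 1) := by omega
  exact_mod_cast this

lemma key_le (q : ℝ) (hq0 : 0 < q) (hq2 : q ≤ 1 / 2) (n : ℕ) (hn : 1 ≤ n) :
    (n : ℝ) / q ≤ q ^ (-(n : ℝ)) := by
  rw [rpow_eq_pow_inv q hq0]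
  have h2 : (2 : ℝ) ≤ q⁻¹ := by
    rw [le_inv_comm₀ (by norm_num) hq0]; linarith
  have hpow : (2 : ℝ) ^ (n - 1) ≤ (q⁻¹) ^ (n - 1) :=
    pow_le_pow_left₀ (by norm_num) h2 _
  have : (n : ℝ) ≤ (q⁻¹) ^ (n - 1) := le_trans (nat_le_two_pow n hn) hpow
  have hstep : (n : ℝ) / q ≤ (q⁻¹) ^ (n - 1) * q⁻¹ := by
    rw [div_eq_mul_inv]
    exact mul_le_mul_of_nonneg_right this (by positivity)
  calc (n : ℝ) / q ≤ (q⁻¹) ^ (n - 1) * q⁻¹ := hstep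
    _ = (q⁻¹) ^ n := by rw [← pow_succ]; congr 1; omega

lemma key_lt (q : ℝ) (hq0 : 0 < q) (hq2 : q < 1 / 2) (n : ℕ) (hn : 2 ≤ n) :
    (n : ℝ) / q < q ^ (-(n : ℝ)) := by
  rw [rpow_eq_pow_inv q hq0]
  have h2 : (2 : ℝ) < q⁻¹ := by
    rw [lt_inv_comm₀ (by norm_num) hq0]; linarith
  have hpow : (2 : ℝ) ^ (n - 1) < (q⁻¹) ^ (n - 1) :=
    pow_lt_pow_left₀ h2 (by norm_num) (by omega)
  have : (n : ℝ) < (q⁻¹) ^ (n - 1) :=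
    lt_of_le_of_lt (nat_le_two_pow n (by omega)) hpow
  have hstep : (n : ℝ) / q < (q⁻¹) ^ (n - 1) * q⁻¹ := by
    rw [div_eq_mul_inv]
    exact mul_lt_mul_of_pos_right this (by positivity)
  calc (n : ℝ) / q < (q⁻¹) ^ (n - 1) * q⁻¹ := hstep
    _ = (q⁻¹) ^ n := by rw [← pow_succ]; congr 1; omega

lemma main_aux (q : ℝ) (hq0 : 0 < q) (hq2 : q ≤ 1 / 2) :
    ∀ l : List ℕ, (∀ n ∈ l, 0 < n) →
    ((l.sum : ℝ) / q ≤ cost q l ∧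
      (q < 1 / 2 → (∃ n ∈ l, 2 ≤ n) → (l.sum : ℝ) / q < cost q l)) := by
  intro l
  induction l with
  | nil => intro _; simp [cost]
  | cons a t ih =>
    intro hpos
    have ha : 1 ≤ a := hpos a (by simp)
    have ht := ih (fun n hn => hpos n (by simp [hn]))
    have hcost : cost q (a :: t) = q ^ (-(a : ℝ)) + cost q t := by simp [cost]
    have hsum : ((a :: t).sum : ℝ) / q = (a : ℝ) / q + (t.sum : ℝ) / q := by
      push_cast [List.sum_cons]; ring
    constructor
    · rw [hcost, hsum]
      exact add_le_add (key_le q hq0 hq2 a ha) ht.1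
    · intro hqlt ⟨n, hn, hn2⟩
      rw [hcost, hsum]
      rcases List.mem_cons.mp hn with rfl | hnt
      · exact add_lt_add_of_lt_of_le (key_lt q hq0 hqlt n hn2) ht.1
      · exact add_lt_add_of_le_of_lt (key_le q hq0 hq2 a ha)
          (ht.2 hqlt ⟨n, hnt, hn2⟩)

theorem stmt_12 (q : ℝ) (hq : q ∈ Set.Ioc (0 : ℝ) (1 / 2))
    (N : ℕ) (hN : 1 ≤ N)
    (l : List ℕ) (hpos : ∀ n ∈ l, 0 < n) (hsum : l.sum = N) :
    (N : ℝ) / q ≤ cost q l ∧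
    (q < 1 / 2 → (∃ n ∈ l, 2 ≤ n) → (N : ℝ) / q < cost q l) := by
  subst hsum
  exact main_aux q hq.1 hq.2 l hpos
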